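/- Let Γ be the free group on two generators g₁, g₂, let H = ℓ²(Γ; ℂ), and for j = 1, 2 let U_j ∈ B(H) be the unitary operator induced by left translation by g_j (so U_j δ_x = δ_{g_j x} for the canonical basis vectors δ_x, x ∈ Γ). Define the bounded linear map ψ : B(H) → B(H) by ψ(T) = U₁* ∘ T ∘ U₁ + U₂* ∘ T ∘ U₂ − 2T, and for t ≥ 0 let Φ_t = exp(t • ψ), the exponential taken in the Banach algebra of bounded linear operators on B(H). Then there exists a positive operator A ∈ B(H) such that Φ_t(A) = A for all t ≥ 0, while Φ_{t₀}(A ∘ A) ≠ A ∘ A for some t₀ ≥ 0; consequently the set of joint fixed points {T ∈ B(H) : Φ_t(T) = T for all t ≥ 0} is not closed under multiplication. -/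

import Mathlib

set_option synthInstance.maxHeartbeats 1000000
set_option maxHeartbeats 2000000

/-- The free group on two generators. -/
abbrev FreeGroupTwo := FreeGroup (Fin 2)

/-- The Hilbert space `ℓ²` of the free group on two generators. -/
noncomputable abbrev L2FreeGroupTwo := lp (fun _ : FreeGroupTwo => ℂ) 2

/-- The norm topology on bounded operators on `B(ℓ²(F₂))` makes it a topological ring
(helper instance, needed to speak of the exponential `exp (t ψ)`). -/
noncomputable instance : IsTopologicalRing
    ((L2FreeGroupTwo →L[ℂ] L2FreeGroupTwo) →L[ℂ] (L2FreeGroupTwo →L[ℂ] L2FreeGroupTwo)) :=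
  @NonUnitalSeminormedRing.toIsTopologicalRing
    ((L2FreeGroupTwo →L[ℂ] L2FreeGroupTwo) →L[ℂ] (L2FreeGroupTwo →L[ℂ] L2FreeGroupTwo)) _

namespace F2Example

open scoped ENNReal

/-- Value of a (possibly absent) letter. -/
def v : Option (Fin 2 × Bool) → ℝ
  | none => 1
  | some (i, b) => if b then (if i = 0 then 2 else 0) else 1

/-- A bounded real function on the free group, depending only on the last letter
of the reduced word. It is harmonic for the (non-symmetric) nearest-neighbour
left random walk generated by the two positive generators. -/
def f (x : FreeGroupTwo) : ℝ := v x.toWord.getLast?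

lemma v_nonneg (o : Option (Fin 2 × Bool)) : 0 ≤ v o := by
  rcases o with _ | ⟨i, b⟩
  · norm_num [v]
  · cases b <;> rcases eq_or_ne i 0 with h | h <;> simp [v, h]

lemma v_le_two (o : Option (Fin 2 × Bool)) : v o ≤ 2 := by
  rcases o with _ | ⟨i, b⟩
  · norm_num [v]
  · cases b <;> rcases eq_or_ne i 0 with h | h <;> norm_num [v, h]

lemma f_nonneg (x : FreeGroupTwo) : 0 ≤ f x := v_nonneg _
lemma f_le_two (x : FreeGroupTwo) : f x ≤ 2 := v_le_two _

lemma toWord_of_mul (j : Fin 2) (x : FreeGroupTwo) :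
    (FreeGroup.of j * x).toWord = FreeGroup.reduce ((j, true) :: x.toWord) := by
  conv_lhs => rw [← FreeGroup.mk_toWord (x := x)]
  rw [show (FreeGroup.of j : FreeGroupTwo) = FreeGroup.mk [(j, true)] from rfl,
    FreeGroup.mul_mk, FreeGroup.toWord_mk]
  rfl

lemma reduce_cons_reduced (a : Fin 2 × Bool) (L : List (Fin 2 × Bool))
    (h : FreeGroup.reduce L = L) :
    FreeGroup.reduce (a :: L) =
      List.casesOn L [a] fun hd tl =>
        if a.1 = hd.1 ∧ a.2 = !hd.2 then tl else a :: hd :: tl := by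
  rw [FreeGroup.reduce.cons, h]

/-- Harmonicity of `f`. -/
lemma key (x : FreeGroupTwo) : f (FreeGroup.of 0 * x) + f (FreeGroup.of 1 * x) = 2 * f x := by
  unfold f
  rw [toWord_of_mul, toWord_of_mul]
  have hred := FreeGroup.reduce_toWord x
  rcases hL : x.toWord with _ | ⟨⟨i, b⟩, tl⟩
  · simp [FreeGroup.reduce, v]
  · rw [hL] at hred
    rw [reduce_cons_reduced _ _ hred, reduce_cons_reduced _ _ hred]
    fin_cases i <;> cases b <;> rcases tl with _ | ⟨t, tl'⟩ <;>
      simp [v, List.getLast?_cons_cons] <;>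
      first
        | ring
        | norm_num [v]

lemma f_one : f 1 = 1 := by simp [f, FreeGroup.toWord_one, v]

lemma f_of_zero : f (FreeGroup.of 0) = 2 := by simp [f, FreeGroup.toWord_of, v]

lemma f_of_one : f (FreeGroup.of 1) = 0 := by simp [f, FreeGroup.toWord_of, v]

lemma memA (u : L2FreeGroupTwo) : Memℓp (fun x => (f x : ℂ) * u x) 2 := by
  apply memℓp_gen
  have hs : Summable fun x => ‖u x‖ ^ (2 : ℝ≥0∞).toReal :=
    Memℓp.summable (by norm_num) (lp.memℓp u)
  have ht : (2 : ℝ≥0∞).toReal = (2 : ℝ) := by norm_num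
  simp only [ht, Real.rpow_two] at hs ⊢
  refine Summable.of_nonneg_of_le (fun x => by positivity) (fun x => ?_) (hs.mul_left 4)
  have h1 : ‖(f x : ℂ) * u x‖ = f x * ‖u x‖ := by
    rw [norm_mul, Complex.norm_real, Real.norm_eq_abs, abs_of_nonneg (f_nonneg x)]
  rw [h1, mul_pow]
  have h4 : f x ^ 2 ≤ 4 := by nlinarith [f_nonneg x, f_le_two x]
  exact mul_le_mul_of_nonneg_right h4 (sq_nonneg _)

/-- The multiplication operator by `f` on `ℓ²(F₂)`. -/
noncomputable def A : L2FreeGroupTwo →L[ℂ] L2FreeGroupTwo :=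
  LinearMap.mkContinuous
    { toFun := fun u => ⟨fun x => (f x : ℂ) * u x, memA u⟩
      map_add' := fun u w => by
        apply lp.ext; funext x
        have : ((u + w : L2FreeGroupTwo) : ∀ _ : FreeGroupTwo, ℂ) x = u x + w x := by
          rw [lp.coeFn_add]; rfl
        change (f x : ℂ) * ((u + w : L2FreeGroupTwo) x) = _
        rw [this]
        have h2 : ∀ (a b : L2FreeGroupTwo) (hab : Memℓp _ 2),
            ((⟨fun y => (f y : ℂ) * a y, hab⟩ + ⟨fun y => (f y : ℂ) * b y, memA b⟩ :
              L2FreeGroupTwo) : ∀ _ : FreeGroupTwo, ℂ) x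
              = (f x : ℂ) * a x + (f x : ℂ) * b x := by
          intro a b hab
          rw [lp.coeFn_add]; rfl
        rw [h2 u w (memA u)]
        ring
      map_smul' := fun c u => by
        apply lp.ext; funext x
        have h1 : ((c • u : L2FreeGroupTwo) : ∀ _ : FreeGroupTwo, ℂ) x = c * u x := by
          rw [lp.coeFn_smul]; rfl
        change (f x : ℂ) * ((c • u : L2FreeGroupTwo) x) = _
        rw [h1]
        have h2 : ((c • (⟨fun y => (f y : ℂ) * u y, memA u⟩ : L2FreeGroupTwo) :
            L2FreeGroupTwo) : ∀ _ : FreeGroupTwo, ℂ) x = c * ((f x : ℂ) * u x) := by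
          rw [lp.coeFn_smul]; rfl
        rw [RingHom.id_apply, h2]
        ring }
    2 (by
      intro u
      refine lp.norm_le_of_tsum_le (by norm_num) (by positivity) ?_
      have ht : (2 : ℝ≥0∞).toReal = (2 : ℝ) := by norm_num
      have hnorm := lp.norm_rpow_eq_tsum (p := 2) (by norm_num) u
      have hs : Summable fun x => ‖u x‖ ^ (2 : ℝ≥0∞).toReal :=
        Memℓp.summable (by norm_num) (lp.memℓp u)
      simp only [ht, Real.rpow_two] at hnorm hs ⊢
      have hterm : ∀ x : FreeGroupTwo,
          ‖(f x : ℂ) * u x‖ ^ 2 ≤ 4 * ‖u x‖ ^ 2 := by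
        intro x
        have h1 : ‖(f x : ℂ) * u x‖ = f x * ‖u x‖ := by
          rw [norm_mul, Complex.norm_real, Real.norm_eq_abs, abs_of_nonneg (f_nonneg x)]
        rw [h1, mul_pow]
        have h4 : f x ^ 2 ≤ 4 := by nlinarith [f_nonneg x, f_le_two x]
        exact mul_le_mul_of_nonneg_right h4 (sq_nonneg _)
      calc (∑' x, ‖(f x : ℂ) * u x‖ ^ 2 : ℝ)
          ≤ ∑' x, 4 * ‖u x‖ ^ 2 := by
            refine Summable.tsum_le_tsum hterm ?_ (hs.mul_left 4)
            exact Summable.of_nonneg_of_le (fun x => by positivity) hterm (hs.mul_left 4)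
        _ = 4 * ∑' x, ‖u x‖ ^ 2 := tsum_mul_left
        _ = (2 * ‖u‖) ^ 2 := by rw [← hnorm]; ring)

@[simp] lemma A_apply (u : L2FreeGroupTwo) (x : FreeGroupTwo) :
    (A u) x = (f x : ℂ) * u x := rfl

lemma A_single (y : FreeGroupTwo) :
    A (lp.single 2 y (1 : ℂ)) = (f y : ℂ) • lp.single 2 y (1 : ℂ) := by
  apply lp.ext; funext x
  rw [A_apply]
  rcases eq_or_ne x y with rfl | hxy
  · rw [lp.coeFn_smul, Pi.smul_apply, smul_eq_mul]
  · rw [lp.coeFn_smul, Pi.smul_apply, smul_eq_mul]; simp [lp.single_apply, hxy]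

/-- Two bounded operators agreeing on the canonical basis vectors coincide. -/
lemma ext_single {T S : L2FreeGroupTwo →L[ℂ] L2FreeGroupTwo}
    (h : ∀ x, T (lp.single 2 x (1 : ℂ)) = S (lp.single 2 x (1 : ℂ))) : T = S := by
  refine ContinuousLinearMap.ext fun u => ?_
  have hu : HasSum (fun x => lp.single 2 x (u x)) u :=
    lp.hasSum_single (by norm_num) u
  have hcongr : (fun x => T (lp.single 2 x (u x))) = fun x => S (lp.single 2 x (u x)) := by
    funext x
    have hx : (lp.single 2 x (u x) : L2FreeGroupTwo)
        = (u x) • (lp.single 2 x (1 : ℂ) : L2FreeGroupTwo) := by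
      apply lp.ext
      funext z
      rw [lp.coeFn_smul, Pi.smul_apply, smul_eq_mul]
      rcases eq_or_ne z x with rfl | hzx
      · simp [lp.single_apply]
      · simp [lp.single_apply, hzx]
    rw [hx, map_smul, map_smul, h x]
  have h1 : HasSum (fun x => T (lp.single 2 x (u x))) (T u) := hu.mapL T
  have h2 : HasSum (fun x => T (lp.single 2 x (u x))) (S u) := by
    rw [hcongr]; exact hu.mapL S
  exact h1.unique h2

lemma hasDerivAt_exp_smul_zero {𝔸 : Type*} [NormedRing 𝔸] [NormedAlgebra ℂ 𝔸] [CompleteSpace 𝔸]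
    (x : 𝔸) : HasDerivAt (fun z : ℂ => NormedSpace.exp (z • x)) x 0 := by
  simpa using hasDerivAt_exp_smul_const (𝕂 := ℂ) x (0 : ℂ)

lemma hasDerivAt_real_of_complex {F : Type*} [NormedAddCommGroup F] [NormedSpace ℂ F]
    (g : ℂ → F) (g' : F) (hderB : HasDerivAt g g' 0) : HasDerivAt (fun t : ℝ => g t) g' 0 := by
  have h3 := hderB.hasFDerivAt.restrictScalars ℝ
  rw [show (0 : ℂ) = ((0 : ℝ) : ℂ) by norm_num] at h3
  have hf' : HasFDerivAt (fun t : ℝ => (t : ℂ)) Complex.ofRealCLM 0 :=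
    Complex.ofRealCLM.hasFDerivAt
  have h4 := h3.comp (0 : ℝ) hf'
  have h5 := h4.hasDerivAt
  simp at h5
  exact h5

end F2Example

open F2Example in
/-- **Theorem 5.8 / Example 5.7.** On `H = ℓ²(F₂)`, with `U₁, U₂` the unitaries of left
translation by the two generators, consider the bounded map
`ψ(T) = U₁* T U₁ + U₂* T U₂ − 2T` on `B(H)` and the norm-continuous semigroup
`Φ_t = exp(t ψ)`. Then there is a positive operator `A` which is a joint fixed point of
the semigroup while `A ∘ A` is not; consequently the set of joint fixed points (the set
of constants of the dynamical quantum system) is not closed under multiplication. -/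
theorem constants_not_closed_under_multiplication
    (U : Fin 2 → (L2FreeGroupTwo →L[ℂ] L2FreeGroupTwo))
    (hUiso : ∀ j, star (U j) * U j = 1) (hUco : ∀ j, U j * star (U j) = 1)
    (hUact : ∀ (j : Fin 2) (x : FreeGroupTwo),
      U j (lp.single 2 x (1 : ℂ)) = lp.single 2 (FreeGroup.of j * x) (1 : ℂ))
    (ψ : (L2FreeGroupTwo →L[ℂ] L2FreeGroupTwo) →L[ℂ]
         (L2FreeGroupTwo →L[ℂ] L2FreeGroupTwo))
    (hψ : ∀ T : L2FreeGroupTwo →L[ℂ] L2FreeGroupTwo,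
      ψ T = star (U 0) * T * U 0 + star (U 1) * T * U 1 - (2 : ℂ) • T) :
    ∃ A : L2FreeGroupTwo →L[ℂ] L2FreeGroupTwo, A.IsPositive ∧
      (∀ t : ℝ, 0 ≤ t → NormedSpace.exp ((t : ℂ) • ψ) A = A) ∧
      (∃ t₀ : ℝ, 0 ≤ t₀ ∧ NormedSpace.exp ((t₀ : ℂ) • ψ) (A * A) ≠ A * A) ∧
      ¬ (∀ S T : L2FreeGroupTwo →L[ℂ] L2FreeGroupTwo,
          (∀ t : ℝ, 0 ≤ t → NormedSpace.exp ((t : ℂ) • ψ) S = S) →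
          (∀ t : ℝ, 0 ≤ t → NormedSpace.exp ((t : ℂ) • ψ) T = T) →
          (∀ t : ℝ, 0 ≤ t → NormedSpace.exp ((t : ℂ) • ψ) (S * T) = S * T)) := by
  classical
  -- star (U j) undoes U j on basis vectors
  have hUstar : ∀ (j : Fin 2) (x : FreeGroupTwo),
      star (U j) (lp.single 2 (FreeGroup.of j * x) (1 : ℂ)) = lp.single 2 x (1 : ℂ) := by
    intro j x
    have h := congrArg
      (fun T : L2FreeGroupTwo →L[ℂ] L2FreeGroupTwo => T (lp.single 2 x (1 : ℂ))) (hUiso j)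
    simp only [ContinuousLinearMap.mul_apply, ContinuousLinearMap.one_apply] at h
    rw [hUact j x] at h
    exact h
  -- conjugation by U j on basis vectors, for operators diagonal on the basis
  have hconj : ∀ (j : Fin 2) (B : L2FreeGroupTwo →L[ℂ] L2FreeGroupTwo)
      (c : FreeGroupTwo → ℂ)
      (hB : ∀ y, B (lp.single 2 y (1 : ℂ)) = c y • lp.single 2 y (1 : ℂ)) (x : FreeGroupTwo),
      (star (U j) * B * U j) (lp.single 2 x (1 : ℂ))
        = c (FreeGroup.of j * x) • lp.single 2 x (1 : ℂ) := by
    intro j B c hB x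
    rw [ContinuousLinearMap.mul_apply, ContinuousLinearMap.mul_apply, hUact j x,
      hB (FreeGroup.of j * x), map_smul, hUstar j x]
  have hA_single : ∀ y, A (lp.single 2 y (1 : ℂ)) = ((f y : ℂ)) • lp.single 2 y (1 : ℂ) :=
    A_single
  have hAA_single : ∀ y, (A * A) (lp.single 2 y (1 : ℂ))
      = ((f y : ℂ) * (f y : ℂ)) • lp.single 2 y (1 : ℂ) := by
    intro y
    rw [ContinuousLinearMap.mul_apply, hA_single, map_smul, hA_single, smul_smul]
  -- ψ A = 0
  have hψA : ψ A = 0 := by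
    rw [hψ]
    have hmain : star (U 0) * A * U 0 + star (U 1) * A * U 1 = (2 : ℂ) • A := by
      apply ext_single
      intro x
      rw [ContinuousLinearMap.add_apply, hconj 0 A _ hA_single x, hconj 1 A _ hA_single x,
        ContinuousLinearMap.smul_apply, hA_single, ← add_smul, smul_smul]
      congr 1
      norm_cast
      linarith [key x]
    rw [hmain, sub_self]
  -- ψ (A * A) ≠ 0
  have hψAA : ψ (A * A) ≠ 0 := by
    intro h0
    have hval := congrArg
      (fun T : L2FreeGroupTwo →L[ℂ] L2FreeGroupTwo =>
        T (lp.single 2 (1 : FreeGroupTwo) (1 : ℂ))) h0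
    simp only [ContinuousLinearMap.zero_apply] at hval
    rw [hψ] at hval
    have h1 : FreeGroup.of (0 : Fin 2) * (1 : FreeGroupTwo) = FreeGroup.of 0 := mul_one _
    have h2 : FreeGroup.of (1 : Fin 2) * (1 : FreeGroupTwo) = FreeGroup.of 1 := mul_one _
    rw [ContinuousLinearMap.sub_apply, ContinuousLinearMap.add_apply,
      hconj 0 (A * A) _ hAA_single 1, hconj 1 (A * A) _ hAA_single 1,
      ContinuousLinearMap.smul_apply, hAA_single, h1, h2] at hval
    rw [← add_smul, smul_smul, ← sub_smul] at hval
    rw [f_of_zero, f_of_one, f_one] at hval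
    rw [smul_eq_zero] at hval
    have hsingle : (lp.single 2 (1 : FreeGroupTwo) (1 : ℂ) : L2FreeGroupTwo) ≠ 0 := by
      intro hzz
      have hns : ‖(lp.single 2 (1 : FreeGroupTwo) (1 : ℂ) : L2FreeGroupTwo)‖ = ‖(1 : ℂ)‖ :=
        lp.norm_single (E := fun _ : FreeGroupTwo => ℂ) (p := 2) (by norm_num) (1 : FreeGroupTwo) (1 : ℂ)
      rw [hzz] at hns
      simp at hns
    rcases hval with hval | hval
    · rw [show ((2 : ℝ) : ℂ) * ((2 : ℝ) : ℂ) + ((0 : ℝ) : ℂ) * ((0 : ℝ) : ℂ)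
          - 2 * (((1 : ℝ) : ℂ) * ((1 : ℝ) : ℂ)) = 2 by push_cast; ring] at hval
      norm_num at hval
    · exact hsingle hval
  -- fixed point property from ψ B = 0
  have hfix : ∀ (B : L2FreeGroupTwo →L[ℂ] L2FreeGroupTwo), ψ B = 0 →
      ∀ c : ℂ, NormedSpace.exp (c • ψ) B = B := by
    intro B hB c
    have hsum := NormedSpace.expSeries_summable' (𝕂 := ℂ) (c • ψ)
    have hev : NormedSpace.exp (c • ψ) B
        = ∑' n : ℕ, ((n.factorial : ℂ))⁻¹ • ((c • ψ) ^ n) B := by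
      rw [NormedSpace.exp_eq_tsum (𝕂 := ℂ)]
      exact ((ContinuousLinearMap.apply ℂ (L2FreeGroupTwo →L[ℂ] L2FreeGroupTwo) B).map_tsum
        hsum).trans (by
          refine tsum_congr fun n => ?_
          simp [ContinuousLinearMap.apply_apply])
    rw [hev, tsum_eq_single 0]
    · simp
    · intro n hn
      obtain ⟨m, rfl⟩ := Nat.exists_eq_succ_of_ne_zero hn
      rw [pow_succ, ContinuousLinearMap.mul_apply]
      rw [ContinuousLinearMap.smul_apply, hB, smul_zero, map_zero, smul_zero]
  -- constancy of the semigroup orbit forces ψ B = 0 (derivative at 0 within `[0, ∞)`)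
  have hconst : ∀ (B : L2FreeGroupTwo →L[ℂ] L2FreeGroupTwo),
      (∀ t : ℝ, 0 ≤ t → NormedSpace.exp ((t : ℂ) • ψ) B = B) → ψ B = 0 := by
    intro B hall
    have hder : HasDerivAt (fun z : ℂ => NormedSpace.exp (z • ψ)) ψ 0 := by
      exact hasDerivAt_exp_smul_zero ψ
    have hderB : HasDerivAt (fun z : ℂ => NormedSpace.exp (z • ψ) B) (ψ B) 0 := by
      have hc := hder.clm_apply (hasDerivAt_const (0 : ℂ) B)
      simpa using hc
    have hderG : HasDerivAt (fun t : ℝ => NormedSpace.exp ((t : ℂ) • ψ) B) (ψ B) 0 := by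
      exact hasDerivAt_real_of_complex _ _ hderB
    have hG0 : HasDerivWithinAt (fun t : ℝ => NormedSpace.exp ((t : ℂ) • ψ) B)
        (ψ B) (Set.Ici 0) 0 := hderG.hasDerivWithinAt
    have hGconst : HasDerivWithinAt (fun t : ℝ => NormedSpace.exp ((t : ℂ) • ψ) B)
        (0 : L2FreeGroupTwo →L[ℂ] L2FreeGroupTwo) (Set.Ici 0) 0 := by
      refine (hasDerivWithinAt_const (0 : ℝ) (Set.Ici (0 : ℝ)) B).congr ?_ ?_
      · intro t ht
        exact hall t ht
      · exact hall 0 le_rfl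
    have huniq : UniqueDiffWithinAt ℝ (Set.Ici (0 : ℝ)) 0 :=
      uniqueDiffOn_Ici 0 0 Set.self_mem_Ici
    have e1 := hG0.derivWithin huniq
    have e2 := hGconst.derivWithin huniq
    exact e1.symm.trans e2
  -- A is positive
  have hApos : A.IsPositive := by
    constructor
    · intro u w
      rw [lp.inner_eq_tsum, lp.inner_eq_tsum]
      refine tsum_congr fun x => ?_
      simp only [ContinuousLinearMap.coe_coe, A_apply, RCLike.inner_apply, map_mul,
        Complex.conj_ofReal]
      ring
    · intro u
      rw [ContinuousLinearMap.reApplyInnerSelf_apply, lp.inner_eq_tsum,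
        ← RCLike.reCLM_apply (K := ℂ),
        RCLike.reCLM.map_tsum (lp.summable_inner (𝕜 := ℂ) (A u) u)]
      refine tsum_nonneg fun x => ?_
      simp only [RCLike.reCLM_apply, A_apply, RCLike.inner_apply, map_mul, Complex.conj_ofReal]
      have hz : u x * (starRingEnd ℂ) (u x) = (Complex.normSq (u x) : ℂ) := by
        rw [Complex.mul_conj]
      rw [mul_left_comm, hz, ← Complex.ofReal_mul]
      simpa [RCLike.re_to_complex] using mul_nonneg (f_nonneg x) (Complex.normSq_nonneg (u x))
  refine ⟨A, hApos, fun t _ => hfix A hψA t, ?_, ?_⟩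
  · by_contra hcon
    push_neg at hcon
    exact hψAA (hconst (A * A) hcon)
  · intro hall
    exact hψAA (hconst (A * A) (hall A A (fun t _ => hfix A hψA t) (fun t _ => hfix A hψA t)))
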